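/- Let a_n = (1/n) Σ_{k=0}^{n−1} (h_n − h_k)/k!, the expected proportion of elements of a random n-point 2D-order whose strict down-set is an antichain. Then lim_{n→∞} n·a_n / ln n = e; more precisely n·a_n − e·ln n converges to e·(γ − Ein(1)) as n → ∞. -/

import Mathlib

open Filter

/-- The `m`-th harmonic number as a real number (`h 0 = 0`). -/
noncomputable def h (m : ℕ) : ℝ := ∑ j ∈ Finset.range m, (1 : ℝ) / (j + 1)

/-- The entire exponential integral `Ein(z) = ∑_{n≥1} (-1)^{n-1} zⁿ/(n·n!)`. -/
noncomputable def Ein (z : ℝ) : ℝ :=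
  ∑' n : ℕ, (-1) ^ n * z ^ (n + 1) / ((n + 1) * (n + 1).factorial)

/-- The expected proportion of elements of a random `n`-point 2D-order whose
strict down-set is an antichain. -/
noncomputable def a (n : ℕ) : ℝ :=
  (1 / n) * ∑ k ∈ Finset.range n, (h n - h k) / k.factorial

open Filter Finset Topology
lemma h_succ (k : ℕ) : h (k+1) = h k + 1/(k+1) := by
  simp [h, Finset.sum_range_succ]

lemma key_binom (k : ℕ) :
    ∑ m ∈ Finset.range k, (-1:ℝ)^m * (k.choose (m+1)) / (m+1) = h k := by
  induction k with
  | zero => simp [h]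
  | succ k ih =>
    rw [h_succ, ← ih]
    have hsplit : ∀ m ∈ Finset.range (k+1), (-1:ℝ)^m * ((k+1).choose (m+1)) / (m+1)
        = (-1:ℝ)^m * (k.choose (m+1)) / (m+1) + (-1:ℝ)^m * (k.choose m) / (m+1) := by
      intro m _
      rw [Nat.choose_succ_succ]
      push_cast
      ring
    rw [Finset.sum_congr rfl hsplit, Finset.sum_add_distrib]
    have h1 : ∑ m ∈ Finset.range (k+1), (-1:ℝ)^m * (k.choose (m+1)) / (m+1)
        = ∑ m ∈ Finset.range k, (-1:ℝ)^m * (k.choose (m+1)) / (m+1) := by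
      rw [Finset.sum_range_succ, Nat.choose_succ_self]
      simp
    have h2 : ∑ m ∈ Finset.range (k+1), (-1:ℝ)^m * (k.choose m) / (m+1)
        = 1/(k+1) := by
      have hterm : ∀ m ∈ Finset.range (k+1), (-1:ℝ)^m * (k.choose m) / (m+1)
          = (1/(k+1)) * ((-1:ℝ)^m * ((k+1).choose (m+1))) := by
        intro m hm
        have := Nat.add_one_mul_choose_eq k m
        have h3 : ((k:ℝ)+1) * (k.choose m) = ((k+1).choose (m+1)) * ((m:ℝ)+1) := by
          exact_mod_cast congrArg (Nat.cast (R := ℝ)) this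
        field_simp
        linear_combination h3
      rw [Finset.sum_congr rfl hterm, ← Finset.mul_sum]
      have halt : ∑ m ∈ Finset.range (k+1), ((-1:ℝ)^m * ((k+1).choose (m+1))) = 1 := by
        have := Int.alternating_sum_range_choose (n := k+1)
        rw [if_neg (Nat.succ_ne_zero k)] at this
        have h4 : ∑ i ∈ Finset.range (k+2), ((-1:ℝ))^i * ((k+1).choose i) = 0 := by
          exact_mod_cast congrArg (Int.cast (R := ℝ)) this
        rw [Finset.sum_range_succ'] at h4
        simp at h4
        have : ∀ m ∈ Finset.range (k+1), ((-1:ℝ))^(m+1) * ((k+1).choose (m+1))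
            = -(((-1:ℝ))^m * ((k+1).choose (m+1))) := by
          intro m _; ring
        rw [Finset.sum_congr rfl this, Finset.sum_neg_distrib] at h4
        linarith
      rw [halt, mul_one]
    rw [h1, h2]

noncomputable def F : ℕ → ℝ
  | 0 => 0
  | (m+1) => (-1)^m / ((m+1) * (m+1).factorial)

lemma abs_F_le (m : ℕ) : ‖F m‖ ≤ 1 / m.factorial := by
  match m with
  | 0 => simp [F]
  | (m+1) =>
    simp only [F, norm_div, norm_pow, norm_neg, norm_one, one_pow, one_div]
    rw [Real.norm_eq_abs, abs_of_pos (by positivity)]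
    have hf : (0:ℝ) < (m+1).factorial := by positivity
    apply inv_anti₀ hf
    have : (0:ℝ) ≤ m := Nat.cast_nonneg m
    nlinarith

lemma summable_norm_F : Summable (fun m => ‖F m‖) := by
  apply Summable.of_nonneg_of_le (fun m => norm_nonneg _) abs_F_le
  simpa using Real.summable_pow_div_factorial 1

lemma summable_F : Summable F := summable_norm_F.of_norm

lemma Ein_one_eq : Ein 1 = ∑' m, F m := by
  rw [summable_F.tsum_eq_zero_add]
  show Ein 1 = F 0 + ∑' n, F (n+1)
  rw [show F 0 = 0 from rfl, zero_add, Ein]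
  apply tsum_congr
  intro n
  show _ = (-1:ℝ)^n / ((n+1) * (n+1).factorial)
  ring

lemma antidiag_sum (n : ℕ) :
    ∑ kl ∈ Finset.HasAntidiagonal.antidiagonal n, F kl.1 * ((1:ℝ)/kl.2.factorial) = h n / n.factorial := by
  rw [Finset.Nat.sum_antidiagonal_eq_sum_range_succ (fun i j => F i * ((1:ℝ)/j.factorial))]
  rw [Finset.sum_range_succ', show F 0 = 0 from rfl]
  rw [← key_binom, Finset.sum_div]
  simp only [zero_mul, add_zero]
  apply Finset.sum_congr rfl
  intro m hm
  have hmn : m + 1 ≤ n := Finset.mem_range.mp hm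
  have hfact := Nat.choose_mul_factorial_mul_factorial hmn
  have hr : ((n.choose (m+1)):ℝ) * (m+1).factorial * (n-(m+1)).factorial = n.factorial := by
    exact_mod_cast congrArg (Nat.cast (R:=ℝ)) hfact
  show F (m+1) * ((1:ℝ)/(n-(m+1)).factorial) = (-1)^m * (n.choose (m+1))/(m+1) / n.factorial
  rw [show F (m+1) = (-1:ℝ)^m / ((m+1) * (m+1).factorial) from rfl]
  have h1 : ((m:ℝ)+1) ≠ 0 := by positivity
  have h2 : ((m+1).factorial:ℝ) ≠ 0 := by positivity
  have h3 : (((n-(m+1)).factorial):ℝ) ≠ 0 := by positivity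
  have h4 : ((n.factorial):ℝ) ≠ 0 := by positivity
  field_simp
  linear_combination -hr

lemma hasSum_exp_one : HasSum (fun n : ℕ => (1 : ℝ) / n.factorial) (Real.exp 1) := by
  have := NormedSpace.expSeries_div_hasSum_exp (1 : ℝ)
  simpa [Real.exp_eq_exp_ℝ, one_pow] using this

lemma summable_norm_g : Summable (fun m : ℕ => ‖(1:ℝ)/m.factorial‖) := by
  have : ∀ m : ℕ, ‖(1:ℝ)/m.factorial‖ = (1:ℝ)/m.factorial := by
    intro m; rw [Real.norm_eq_abs, abs_of_pos (by positivity)]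
  rw [funext this]
  exact hasSum_exp_one.summable

lemma summable_hfact : Summable (fun n : ℕ => h n / n.factorial) := by
  have := (summable_norm_sum_mul_antidiagonal_of_summable_norm
    (f := F) (g := fun m => (1:ℝ)/m.factorial) summable_norm_F summable_norm_g).of_norm
  exact this.congr antidiag_sum

lemma exp_mul_Ein : Real.exp 1 * Ein 1 = ∑' n, h n / n.factorial := by
  rw [Ein_one_eq, mul_comm]
  rw [← hasSum_exp_one.tsum_eq]
  rw [tsum_mul_tsum_eq_tsum_sum_antidiagonal_of_summable_norm summable_norm_F summable_norm_g]
  exact tsum_congr antidiag_sum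

noncomputable def En (n : ℕ) : ℝ := ∑ k ∈ Finset.range n, (1:ℝ)/k.factorial
noncomputable def Sn (n : ℕ) : ℝ := ∑ k ∈ Finset.range n, h k/k.factorial

lemma fact_ge (n : ℕ) (hn : 1 ≤ n) (i : ℕ) : n.factorial * 2^i ≤ (i + n).factorial := by
  induction i with
  | zero => simp
  | succ i ih =>
    have : (i + 1 + n).factorial = (i + n + 1) * (i + n).factorial := by
      rw [show i + 1 + n = (i + n) + 1 by ring, Nat.factorial_succ]
    rw [this, pow_succ]
    calc n.factorial * (2^i * 2) = 2 * (n.factorial * 2^i) := by ring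
    _ ≤ 2 * (i + n).factorial := by omega
    _ ≤ (i + n + 1) * (i + n).factorial := by
        apply Nat.mul_le_mul_right; omega

lemma tail_nonneg (n : ℕ) : 0 ≤ Real.exp 1 - En n := by
  have := hasSum_exp_one.summable.sum_add_tsum_nat_add n
  rw [hasSum_exp_one.tsum_eq] at this
  have h0 : Real.exp 1 - En n = ∑' i, (1:ℝ)/(i+n).factorial := by
    rw [← this]; simp [En]
  rw [h0]
  apply tsum_nonneg
  intro i; positivity

lemma tail_le (n : ℕ) (hn : 1 ≤ n) : Real.exp 1 - En n ≤ 2 / n.factorial := by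
  have := hasSum_exp_one.summable.sum_add_tsum_nat_add n
  rw [hasSum_exp_one.tsum_eq] at this
  have h0 : Real.exp 1 - En n = ∑' i, (1:ℝ)/(i+n).factorial := by
    rw [← this]; simp [En]
  rw [h0]
  have hsumg : Summable (fun i : ℕ => (1:ℝ)/n.factorial * (1/2)^i) :=
    (summable_geometric_two).mul_left _
  have hle : ∀ i : ℕ, (1:ℝ)/(i+n).factorial ≤ (1:ℝ)/n.factorial * (1/2)^i := by
    intro i
    rw [div_pow, one_pow, div_mul_div_comm, one_mul]
    apply div_le_div_of_nonneg_left one_pos.le (by positivity)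
    exact_mod_cast fact_ge n hn i
  calc ∑' i, (1:ℝ)/(i+n).factorial ≤ ∑' i, (1:ℝ)/n.factorial * (1/2)^i := by
        apply Summable.tsum_le_tsum hle _ hsumg
        apply (hsumg.of_nonneg_of_le (fun i => by positivity) hle)
  _ = (1:ℝ)/n.factorial * 2 := by rw [tsum_mul_left, tsum_geometric_two]
  _ = 2 / n.factorial := by ring

lemma tendsto_n_div_fact : Tendsto (fun n : ℕ => (n:ℝ)/n.factorial) atTop (𝓝 0) := by
  apply Summable.tendsto_atTop_zero
  refine Summable.of_nonneg_of_le (fun n => by positivity) (fun n => ?_)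
    (Real.summable_pow_div_factorial 2)
  gcongr
  exact_mod_cast (Nat.lt_two_pow_self (n := n)).le

lemma tendsto_log_tail : Tendsto (fun n : ℕ => Real.log n * (Real.exp 1 - En n)) atTop (𝓝 0) := by
  have hub : Tendsto (fun n : ℕ => 2 * ((n:ℝ)/n.factorial)) atTop (𝓝 0) := by
    simpa using tendsto_n_div_fact.const_mul 2
  apply tendsto_of_tendsto_of_tendsto_of_le_of_le' tendsto_const_nhds hub
  · filter_upwards [eventually_ge_atTop 1] with n hn
    have h1 : (0:ℝ) ≤ Real.log n := Real.log_nonneg (by exact_mod_cast hn)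
    exact mul_nonneg h1 (tail_nonneg n)
  · filter_upwards [eventually_ge_atTop 1] with n hn
    have hn1 : (1:ℝ) ≤ (n:ℝ) := by exact_mod_cast hn
    have h1 : Real.log n ≤ (n:ℝ) := by
      have := Real.log_le_sub_one_of_pos (x := (n:ℝ)) (by linarith)
      linarith
    calc Real.log n * (Real.exp 1 - En n) ≤ (n:ℝ) * (2/n.factorial) := by
          apply mul_le_mul h1 (tail_le n hn) (tail_nonneg n) (by linarith)
    _ = 2 * ((n:ℝ)/n.factorial) := by ring

lemma h_eq_harmonic (n : ℕ) : h n = (harmonic n : ℝ) := by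
  simp [h, harmonic, one_div]

lemma na_eq (n : ℕ) (hn : 1 ≤ n) : (n:ℝ) * a n = h n * En n - Sn n := by
  have hn0 : (n:ℝ) ≠ 0 := by positivity
  rw [a, ← mul_assoc, mul_one_div, div_self hn0, one_mul]
  rw [En, Sn, Finset.mul_sum, ← Finset.sum_sub_distrib]
  apply Finset.sum_congr rfl
  intro k _
  rw [sub_div, mul_one_div]

lemma part2 : Tendsto (fun n : ℕ => n * a n - Real.exp 1 * Real.log n) atTop
    (𝓝 (Real.exp 1 * (Real.eulerMascheroniConstant - Ein 1))) := by
  have hH : Tendsto (fun n : ℕ => h n - Real.log n) atTop (𝓝 Real.eulerMascheroniConstant) := by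
    apply Real.tendsto_harmonic_sub_log.congr
    intro n; rw [h_eq_harmonic]
  have hE : Tendsto En atTop (𝓝 (Real.exp 1)) := hasSum_exp_one.tendsto_sum_nat
  have hT : Tendsto Sn atTop (𝓝 (Real.exp 1 * Ein 1)) := by
    rw [exp_mul_Ein]
    exact summable_hfact.hasSum.tendsto_sum_nat
  have hL : Tendsto (fun n : ℕ => Real.log n * (En n - Real.exp 1)) atTop (𝓝 0) := by
    have := tendsto_log_tail.neg
    rw [neg_zero] at this
    apply this.congr
    intro n; ring
  have hcombo : Tendsto (fun n : ℕ =>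
      (h n - Real.log n) * En n + Real.log n * (En n - Real.exp 1) - Sn n) atTop
      (𝓝 (Real.eulerMascheroniConstant * Real.exp 1 + 0 - Real.exp 1 * Ein 1)) :=
    ((hH.mul hE).add hL).sub hT
  have heq : Real.eulerMascheroniConstant * Real.exp 1 + 0 - Real.exp 1 * Ein 1
      = Real.exp 1 * (Real.eulerMascheroniConstant - Ein 1) := by ring
  rw [heq] at hcombo
  apply hcombo.congr'
  filter_upwards [eventually_ge_atTop 1] with n hn
  rw [na_eq n hn]
  ring

lemma part1 : Tendsto (fun n : ℕ => (n * a n) / Real.log n) atTop (𝓝 (Real.exp 1)) := by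
  have hinv : Tendsto (fun n : ℕ => (Real.log n)⁻¹) atTop (𝓝 0) :=
    (Real.tendsto_log_atTop.comp tendsto_natCast_atTop_atTop).inv_tendsto_atTop
  have h2 := (part2.mul hinv).add_const (Real.exp 1)
  rw [mul_zero, zero_add] at h2
  apply h2.congr'
  filter_upwards [eventually_ge_atTop 2] with n hn
  have hlog : Real.log n ≠ 0 := by
    have : (1:ℝ) < n := by exact_mod_cast Nat.lt_of_lt_of_le Nat.one_lt_two hn
    exact (Real.log_pos this).ne'
  field_simp
  ring


theorem stmt14 :
    Tendsto (fun n : ℕ => (n * a n) / Real.log n) atTop (nhds (Real.exp 1)) ∧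
    Tendsto (fun n : ℕ => n * a n - Real.exp 1 * Real.log n) atTop
      (nhds (Real.exp 1 * (Real.eulerMascheroniConstant - Ein 1))) := by
  exact ⟨part1, part2⟩
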